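/- Let K be a field and let (z_m)_{m∈ℤ} be a sequence of nonzero elements satisfying z_{m+1} z_{m-1} = z_m + 1 for all m (the rank-2 cluster recurrence of type A_2). Then the sequence is periodic with period 5: z_{m+5} = z_m for all m. -/
import Mathlib


/-- Pentagon (Zamolodchikov) periodicity in type `A₂`: a sequence of nonzero field
    elements with `z_{m+1} z_{m-1} = z_m + 1` is periodic of period `5`. -/
theorem stmt_8 (K : Type*) [Field K] (z : ℤ → K)
    (hz : ∀ m : ℤ, z m ≠ 0)
    (hrec : ∀ m : ℤ, z (m + 1) * z (m - 1) = z m + 1) :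
    ∀ m : ℤ, z (m + 5) = z m := by
  intro m
  have h1 : z (m+2) * z m = z (m+1) + 1 := by
    simpa [show m+1+1 = m+2 by ring, show m+1-1 = m by ring] using hrec (m+1)
  have h2 : z (m+3) * z (m+1) = z (m+2) + 1 := by
    simpa [show m+2+1 = m+3 by ring, show m+2-1 = m+1 by ring] using hrec (m+2)
  have h3 : z (m+4) * z (m+2) = z (m+3) + 1 := by
    simpa [show m+3+1 = m+4 by ring, show m+3-1 = m+2 by ring] using hrec (m+3)
  have h4 : z (m+5) * z (m+3) = z (m+4) + 1 := by
    simpa [show m+4+1 = m+5 by ring, show m+4-1 = m+3 by ring] using hrec (m+4)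
  have key : z (m+5) * (z (m+3) * z (m+2)) = z m * (z (m+3) * z (m+2)) := by
    linear_combination (z (m+2)) * h4 + h3 - (z (m+3)) * h1 - h2
  exact mul_right_cancel₀ (mul_ne_zero (hz (m+3)) (hz (m+2))) key
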